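/- Let {(Xₙ, Yₙ)} be a sequence of bivariate random vectors converging in distribution to (X,Y). If Xₙ ≤_{st:wj} Yₙ for all n, then X ≤_{st:wj} Y. -/

import Mathlib

open MeasureTheory ProbabilityTheory Filter


noncomputable def rampFun (a b z : ℝ) : ℝ := max 0 (min 1 ((z - a) / (b - a)))

lemma rampFun_nonneg (a b z : ℝ) : 0 ≤ rampFun a b z := le_max_left _ _

lemma rampFun_le_one (a b z : ℝ) : rampFun a b z ≤ 1 :=
  max_le zero_le_one (min_le_left _ _)

lemma rampFun_continuous (a b : ℝ) : Continuous (rampFun a b) :=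
  continuous_const.max (continuous_const.min
    ((continuous_id.sub continuous_const).div_const _))

noncomputable def ramp (a b : ℝ) : BoundedContinuousFunction ℝ ℝ :=
  BoundedContinuousFunction.mkOfBound ⟨rampFun a b, rampFun_continuous a b⟩ 1
    (by
      intro x y
      show dist (rampFun a b x) (rampFun a b y) ≤ 1
      rw [Real.dist_eq, abs_le]
      have h1 := rampFun_nonneg a b x
      have h2 := rampFun_nonneg a b y
      have h3 := rampFun_le_one a b x
      have h4 := rampFun_le_one a b y
      constructor <;> linarith)

lemma ramp_apply (a b z : ℝ) : ramp a b z = rampFun a b z := rfl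

lemma ramp_eq_one (a b z : ℝ) (hab : a < b) (hz : b ≤ z) : ramp a b z = 1 := by
  have hba : 0 < b - a := by linarith
  have : (1:ℝ) ≤ (z - a) / (b - a) := (le_div_iff₀ hba).mpr (by linarith)
  rw [ramp_apply, rampFun, min_eq_left this, max_eq_right zero_le_one]

lemma ramp_eq_zero (a b z : ℝ) (hab : a < b) (hz : z ≤ a) : ramp a b z = 0 := by
  have hba : 0 < b - a := by linarith
  have : (z - a) / (b - a) ≤ 0 := div_nonpos_of_nonpos_of_nonneg (by linarith) hba.le
  rw [ramp_apply, rampFun, max_eq_left (le_trans (min_le_right _ _) this)]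

lemma ramp_comp_integrable {Ω : Type*} [MeasurableSpace Ω] (μ : Measure Ω)
    [IsProbabilityMeasure μ] (Z : Ω → ℝ) (hZ : Measurable Z) (a b : ℝ) :
    Integrable (fun ω => ramp a b (Z ω)) μ := by
  apply (integrable_const (1:ℝ)).mono'
  · exact ((ramp a b).continuous.measurable.comp hZ).aestronglyMeasurable
  · filter_upwards with ω
    rw [Real.norm_eq_abs, ramp_apply, abs_le]
    exact ⟨by linarith [rampFun_nonneg a b (Z ω)], rampFun_le_one a b (Z ω)⟩

lemma tail_le_integral_ramp {Ω : Type*} [MeasurableSpace Ω] (μ : Measure Ω)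
    [IsProbabilityMeasure μ] (Z : Ω → ℝ) (hZ : Measurable Z) (a b : ℝ) (hab : a < b) :
    (μ {ω | Z ω > b}).toReal ≤ ∫ ω, ramp a b (Z ω) ∂μ := by
  have hs : MeasurableSet {ω | Z ω > b} := measurableSet_lt measurable_const hZ
  have hind := integral_indicator_const (1:ℝ) hs (μ := μ)
  rw [smul_eq_mul, mul_one, measureReal_def] at hind
  rw [← hind]
  apply integral_mono ((integrable_const (1:ℝ)).indicator hs)
    (ramp_comp_integrable μ Z hZ a b)
  intro ω
  by_cases hω : ω ∈ {ω | Z ω > b}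
  · rw [Set.indicator_of_mem hω]
    show (1:ℝ) ≤ ramp a b (Z ω)
    rw [ramp_eq_one a b (Z ω) hab (le_of_lt hω)]
  · rw [Set.indicator_of_notMem hω]
    exact rampFun_nonneg a b (Z ω)

lemma integral_ramp_le_tail {Ω : Type*} [MeasurableSpace Ω] (μ : Measure Ω)
    [IsProbabilityMeasure μ] (Z : Ω → ℝ) (hZ : Measurable Z) (a b : ℝ) (hab : a < b) :
    ∫ ω, ramp a b (Z ω) ∂μ ≤ (μ {ω | Z ω > a}).toReal := by
  have hs : MeasurableSet {ω | Z ω > a} := measurableSet_lt measurable_const hZ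
  have hind := integral_indicator_const (1:ℝ) hs (μ := μ)
  rw [smul_eq_mul, mul_one, measureReal_def] at hind
  rw [← hind]
  apply integral_mono (ramp_comp_integrable μ Z hZ a b)
    ((integrable_const (1:ℝ)).indicator hs)
  intro ω
  by_cases hω : ω ∈ {ω | Z ω > a}
  · rw [Set.indicator_of_mem hω]
    exact rampFun_le_one a b (Z ω)
  · rw [Set.indicator_of_notMem hω]
    show ramp a b (Z ω) ≤ 0
    rw [ramp_eq_zero a b (Z ω) hab (by simpa using hω)]

/-- Preservation under convergence in distribution: if `(Xₙ, Yₙ)` converges in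
distribution to `(X, Y)` and `Xₙ ≤_{st:wj} Yₙ` for all `n`, then
`X ≤_{st:wj} Y`. -/
theorem stwj_of_tendsto_in_distribution {Ω : Type*} [MeasurableSpace Ω]
    (μ : Measure Ω) [IsProbabilityMeasure μ]
    (X Y : Ω → ℝ) (Xs Ys : ℕ → Ω → ℝ)
    (hXm : Measurable X) (hYm : Measurable Y)
    (hXsm : ∀ n, Measurable (Xs n)) (hYsm : ∀ n, Measurable (Ys n))
    (hconv : ∀ f : BoundedContinuousFunction (ℝ × ℝ) ℝ,
      Tendsto (fun n => ∫ ω, f (Xs n ω, Ys n ω) ∂μ) atTop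
        (nhds (∫ ω, f (X ω, Y ω) ∂μ)))
    (h : ∀ n, ∀ t : ℝ, μ {ω | Xs n ω - Ys n ω > t} ≤ μ {ω | Ys n ω - Xs n ω > t}) :
    ∀ t : ℝ, μ {ω | X ω - Y ω > t} ≤ μ {ω | Y ω - X ω > t} := by
  intro t
  have hZ : Measurable (fun ω => X ω - Y ω) := hXm.sub hYm
  have hW : Measurable (fun ω => Y ω - X ω) := hYm.sub hXm
  -- key step: for every b > t, μ {X - Y > b} ≤ μ {Y - X > t}
  have key : ∀ b : ℝ, t < b → μ {ω | X ω - Y ω > b} ≤ μ {ω | Y ω - X ω > t} := by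
    intro b hb
    set m : ℝ := (t + b) / 2 with hm
    have htm : t < m := by rw [hm]; linarith
    have hmb : m < b := by rw [hm]; linarith
    set F : BoundedContinuousFunction (ℝ × ℝ) ℝ :=
      (ramp m b).compContinuous ⟨fun p : ℝ × ℝ => p.1 - p.2, by continuity⟩ with hF
    set G : BoundedContinuousFunction (ℝ × ℝ) ℝ :=
      (ramp t m).compContinuous ⟨fun p : ℝ × ℝ => p.2 - p.1, by continuity⟩ with hG
    have hFeq : ∀ (U V : Ω → ℝ) (ω : Ω), F (U ω, V ω) = ramp m b (U ω - V ω) :=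
      fun U V ω => rfl
    have hGeq : ∀ (U V : Ω → ℝ) (ω : Ω), G (U ω, V ω) = ramp t m (V ω - U ω) :=
      fun U V ω => rfl
    have hstep : ∀ n, ∫ ω, F (Xs n ω, Ys n ω) ∂μ ≤ ∫ ω, G (Xs n ω, Ys n ω) ∂μ := by
      intro n
      have h1 : ∫ ω, F (Xs n ω, Ys n ω) ∂μ
          ≤ (μ {ω | Xs n ω - Ys n ω > m}).toReal := by
        exact integral_ramp_le_tail μ (fun ω => Xs n ω - Ys n ω)
          ((hXsm n).sub (hYsm n)) m b hmb
      have h2 : (μ {ω | Xs n ω - Ys n ω > m}).toReal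
          ≤ (μ {ω | Ys n ω - Xs n ω > m}).toReal :=
        ENNReal.toReal_mono (measure_ne_top μ _) (h n m)
      have h3 : (μ {ω | Ys n ω - Xs n ω > m}).toReal
          ≤ ∫ ω, G (Xs n ω, Ys n ω) ∂μ := by
        exact tail_le_integral_ramp μ (fun ω => Ys n ω - Xs n ω)
          ((hYsm n).sub (hXsm n)) t m htm
      linarith
    have hlim : ∫ ω, F (X ω, Y ω) ∂μ ≤ ∫ ω, G (X ω, Y ω) ∂μ :=
      le_of_tendsto_of_tendsto' (hconv F) (hconv G) hstep
    have h4 : (μ {ω | X ω - Y ω > b}).toReal ≤ ∫ ω, F (X ω, Y ω) ∂μ := by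
      exact tail_le_integral_ramp μ (fun ω => X ω - Y ω) hZ m b hmb
    have h5 : ∫ ω, G (X ω, Y ω) ∂μ ≤ (μ {ω | Y ω - X ω > t}).toReal := by
      exact integral_ramp_le_tail μ (fun ω => Y ω - X ω) hW t m htm
    exact (ENNReal.toReal_le_toReal (measure_ne_top μ _) (measure_ne_top μ _)).mp
      (by linarith)
  -- write {X - Y > t} as a monotone union
  have hmono : Monotone (fun n : ℕ => {ω | X ω - Y ω > t + 1 / (n + 1)}) := by
    intro n k hnk ω hω
    simp only [Set.mem_setOf_eq] at hω ⊢
    have hle : 1 / ((k:ℝ) + 1) ≤ 1 / ((n:ℝ) + 1) :=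
      one_div_le_one_div_of_le (by positivity) (by exact_mod_cast Nat.succ_le_succ hnk)
    linarith
  have hsub : {ω | X ω - Y ω > t} = ⋃ n : ℕ, {ω | X ω - Y ω > t + 1 / (n + 1)} := by
    ext ω
    simp only [Set.mem_iUnion, Set.mem_setOf_eq]
    constructor
    · intro hω
      obtain ⟨n, hn⟩ := exists_nat_one_div_lt (sub_pos.mpr hω)
      exact ⟨n, by push_cast at hn ⊢; linarith⟩
    · rintro ⟨n, hn⟩
      have : (0:ℝ) < 1 / ((n:ℝ) + 1) := by positivity
      linarith
  rw [hsub, hmono.directed_le.measure_iUnion]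
  exact iSup_le fun n => key _ (lt_add_of_pos_right t (by positivity))
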